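/- There exists an even permutation of a set of size d^n (d ≥ 2, n ≥ 2) that cannot be written as a product of fewer than C·d permutations each of which acts on only d^{n−1} points in the structured sense: if N satisfies (n · (d^{n−1})!)^N ≥ (d^n)!/2, then N = Ω(d); concretely, N ≥ (n·d^n·ln d − d^n − ln 2) / ((n−1)·d^{n−1}·ln d + ln n). -/

import Mathlib

/-- If N sub-circuits suffice, i.e. (n·(d^{n-1})!)^N ≥ (d^n)!/2, then
N ≥ (n·d^n·ln d − d^n − ln 2) / ((n−1)·d^{n−1}·ln d + ln n). -/
theorem stmt_15 (d n N : ℕ) (hd : 2 ≤ d) (hn : 2 ≤ n)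
    (h : 2 * (n * (d ^ (n - 1)).factorial) ^ N ≥ (d ^ n).factorial) :
    (N : ℝ) ≥ ((n : ℝ) * d ^ n * Real.log d - d ^ n - Real.log 2) /
      (((n : ℝ) - 1) * d ^ (n - 1) * Real.log d + Real.log n) := by
  set m : ℕ := d ^ n with hm
  set k : ℕ := d ^ (n - 1) with hk
  have hd1 : (1:ℝ) < d := by exact_mod_cast hd
  have hlogd : 0 < Real.log d := Real.log_pos hd1
  have hn1 : (1:ℝ) < n := by exact_mod_cast hn
  have hlogn : 0 < Real.log n := Real.log_pos hn1
  have hmpos : 0 < m := Nat.pow_pos (by omega : 0 < d)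
  have hkpos : 0 < k := Nat.pow_pos (by omega : 0 < d)
  -- denominator positivity
  have hD : 0 < ((n : ℝ) - 1) * k * Real.log d + Real.log n := by
    have : (0:ℝ) ≤ ((n : ℝ) - 1) * k * Real.log d := by
      apply mul_nonneg (mul_nonneg (by linarith) (by positivity)) hlogd.le
    linarith
  -- lower bound: m log m - m ≤ log m!
  have hfac_lb : (m:ℝ) * Real.log m - m ≤ Real.log (m.factorial) := by
    have h1 : (m:ℝ) ^ m ≤ Real.exp m * m.factorial := by
      have := Real.pow_div_factorial_le_exp (x := (m:ℝ)) (by positivity) m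
      have hfp : (0:ℝ) < m.factorial := by exact_mod_cast m.factorial_pos
      rw [div_le_iff₀ hfp] at this
      linarith [this]
    have h2 := Real.log_le_log (by positivity) h1
    rw [Real.log_pow, Real.log_mul (Real.exp_ne_zero _)
      (by exact_mod_cast m.factorial_pos.ne'), Real.log_exp] at h2
    linarith
  -- upper bound: log m! ≤ log 2 + N * log (n * k!)
  have hKpos : 0 < n * k.factorial := Nat.mul_pos (by omega) k.factorial_pos
  have hh : (m.factorial : ℝ) ≤ 2 * ((n:ℝ) * k.factorial) ^ N := by
    exact_mod_cast h
  have hfac_ub : Real.log (m.factorial) ≤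
      Real.log 2 + N * Real.log ((n:ℝ) * k.factorial) := by
    have := Real.log_le_log (by exact_mod_cast m.factorial_pos) hh
    rw [Real.log_mul (by norm_num) (by positivity), Real.log_pow] at this
    linarith
  -- log (n * k!) ≤ D
  have hlogK : Real.log ((n:ℝ) * k.factorial) ≤
      ((n : ℝ) - 1) * k * Real.log d + Real.log n := by
    rw [Real.log_mul (by positivity) (by exact_mod_cast k.factorial_pos.ne')]
    have h1 : Real.log (k.factorial : ℝ) ≤ ((n:ℝ) - 1) * k * Real.log d := by
      have hle : (k.factorial : ℝ) ≤ (k:ℝ) ^ k := by exact_mod_cast k.factorial_le_pow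
      calc Real.log (k.factorial : ℝ) ≤ Real.log ((k:ℝ) ^ k) :=
            Real.log_le_log (by exact_mod_cast k.factorial_pos) hle
        _ = (k:ℝ) * Real.log k := Real.log_pow _ _
        _ = ((n:ℝ) - 1) * k * Real.log d := by
            rw [hk]
            push_cast
            rw [Real.log_pow]
            push_cast [Nat.cast_sub (by omega : 1 ≤ n)]
            ring
    linarith
  -- log m = n log d
  have hlogm : Real.log (m:ℝ) = n * Real.log d := by
    rw [hm]; push_cast; rw [Real.log_pow]
  have hNK : (N:ℝ) * Real.log ((n:ℝ) * k.factorial) ≤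
      (N:ℝ) * (((n : ℝ) - 1) * k * Real.log d + Real.log n) :=
    mul_le_mul_of_nonneg_left hlogK (by positivity)
  have hmcast : ((m:ℕ):ℝ) = (d:ℝ) ^ n := by rw [hm]; push_cast; ring
  have hkcast : ((k:ℕ):ℝ) = (d:ℝ) ^ (n-1) := by rw [hk]; push_cast; ring
  rw [← hmcast, ← hkcast, ge_iff_le, div_le_iff₀ hD]
  nlinarith [hfac_lb, hfac_ub, hNK, hlogm]
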